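/- Fix integers N ≥ 1, p ≥ 1, a tensor Θ ∈ ℝ^{N×N×p}, ε ∈ (0,1/2), L_f > 0, and a function f : ℝ → [ε, 1−ε] that is L_f-Lipschitz. Let S = {0,1}^N and define the MBP conditional pmf q and block pmfs p_z as in the context. Then for all z, y ∈ S^p, the Kullback–Leibler divergence satisfies Σ_{a∈S^p} p_z(a)·log(p_z(a)/p_y(a)) ≤ (3L_f²/(4ε(1−ε))) · Σ_{t=1}^p Σ_{i=1}^N (Σ_{ℓ=t}^p Σ_{j=1}^N |Θ_{ijℓ}|)². -/

import Mathlib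

open Finset

/-- The history argument at step `i` (0-indexed) of a block of `p` steps of a
`p`-Markov process. -/
def histArg {S : Type*} {p : ℕ} (a z : Fin p → S) (i : Fin p) : Fin p → S :=
  fun j =>
    if (j : ℕ) < (i : ℕ) then
      a ⟨(i : ℕ) - 1 - (j : ℕ),
        lt_of_le_of_lt (le_trans (Nat.sub_le _ _) (Nat.sub_le _ _)) i.isLt⟩
    else
      z ⟨(j : ℕ) - (i : ℕ), lt_of_le_of_lt (Nat.sub_le _ _) j.isLt⟩

/-- The block pmf `p_z` on `S^p` of `p` consecutive steps of the `p`-Markov process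
with conditional pmf `q`, started from the history `z` (most recent first). -/
def blockPmf {S : Type*} {p : ℕ} (q : S → (Fin p → S) → ℝ)
    (z : Fin p → S) (a : Fin p → S) : ℝ :=
  ∏ i : Fin p, q (a i) (histArg a z i)

/-- `⟨Θ_{i**}, b⟩ = Σ_j Σ_ℓ Θ_{ijℓ} (b_ℓ)_j` for a binary history `b` (most recent
first). -/
def mbpInner {N p : ℕ} (Θ : Fin N → Fin N → Fin p → ℝ) (i : Fin N)
    (b : Fin p → (Fin N → Bool)) : ℝ :=
  ∑ j : Fin N, ∑ ℓ : Fin p, Θ i j ℓ * (if b ℓ j then 1 else 0)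

/-- The MBP conditional pmf
`q(ξ|b) = Π_i f(⟨Θ_{i**},b⟩)^{ξ_i} (1−f(⟨Θ_{i**},b⟩))^{1−ξ_i}`. -/
def mbpQ {N p : ℕ} (Θ : Fin N → Fin N → Fin p → ℝ) (f : ℝ → ℝ)
    (ξ : Fin N → Bool) (b : Fin p → (Fin N → Bool)) : ℝ :=
  ∏ i : Fin N, if ξ i then f (mbpInner Θ i b) else 1 - f (mbpInner Θ i b)



lemma klBern (ε : ℝ) (hε0 : 0 < ε) (hε1 : ε < 1/2) (α β : ℝ)
    (hα : α ∈ Set.Icc ε (1-ε)) (hβ : β ∈ Set.Icc ε (1-ε)) :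
    α * (Real.log α - Real.log β) + (1-α) * (Real.log (1-α) - Real.log (1-β))
      ≤ (α - β)^2 / (2*ε*(1-ε)) := by
  obtain ⟨hα1, hα2⟩ := hα
  obtain ⟨hβ1, hβ2⟩ := hβ
  have hε1' : ε < 1 - ε := by linarith
  have he : (0:ℝ) < ε * (1-ε) := by nlinarith
  set c : ℝ := (2*ε*(1-ε))⁻¹ with hc
  set ψ : ℝ → ℝ := fun s => α * Real.log s + (1-α) * Real.log (1-s) + (α-s)^2 * c
    with hψ
  have hd : ∀ x, 0 < x → x < 1 →
      HasDerivAt ψ ((x - α) * ((ε*(1-ε))⁻¹ - (x*(1-x))⁻¹)) x := by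
    intro x hx0 hx1
    have hx1' : (0:ℝ) < 1 - x := by linarith
    have h1 : HasDerivAt (fun s : ℝ => α * Real.log s) (α * x⁻¹) x :=
      (Real.hasDerivAt_log hx0.ne').const_mul α
    have h2i : HasDerivAt (fun s : ℝ => 1 - s) (-1) x := (hasDerivAt_id x).const_sub 1
    have h2 : HasDerivAt (fun s : ℝ => Real.log (1 - s)) ((1-x)⁻¹ * (-1)) x :=
      (Real.hasDerivAt_log hx1'.ne').comp x h2i
    have h3 : HasDerivAt (fun s : ℝ => (α - s)^2) ((2:ℕ) * (α - x)^(2-1) * (-1)) x :=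
      ((hasDerivAt_id x).const_sub α).pow 2
    have h := (h1.add (h2.const_mul (1-α))).add (h3.mul_const c)
    refine h.congr_deriv ?_
    have : (x*(1-x))⁻¹ = x⁻¹ * (1-x)⁻¹ := by
      rw [mul_inv]
    have hne : (2*ε*(1-ε)) ≠ 0 := by nlinarith
    rw [this, hc]
    field_simp
    ring
  have hψle : ψ α ≤ ψ β := by
    rcases le_total α β with hab | hab
    · have hmono : MonotoneOn ψ (Set.Icc α (1-ε)) := by
        apply monotoneOn_of_deriv_nonneg (convex_Icc _ _)
        · intro x hx
          exact (hd x (lt_of_lt_of_le hε0 (le_trans hα1 hx.1)) (by linarith [hx.2])).continuousAt.continuousWithinAt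
        · intro x hx
          rw [interior_Icc] at hx
          exact (hd x (by linarith [hx.1]) (by linarith [hx.2])).differentiableAt.differentiableWithinAt
        · intro x hx
          rw [interior_Icc] at hx
          obtain ⟨hx1, hx2⟩ := hx
          rw [(hd x (by linarith) (by linarith)).deriv]
          have hkey : ε * (1-ε) ≤ x * (1-x) := by nlinarith
          have : (x*(1-x))⁻¹ ≤ (ε*(1-ε))⁻¹ := by
            exact inv_anti₀ he hkey
          apply mul_nonneg (by linarith) (by linarith)
      exact hmono ⟨le_refl _, hα2⟩ ⟨hab, hβ2⟩ hab
    · have hanti : AntitoneOn ψ (Set.Icc ε α) := by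
        apply antitoneOn_of_deriv_nonpos (convex_Icc _ _)
        · intro x hx
          exact (hd x (lt_of_lt_of_le hε0 hx.1) (by nlinarith [hx.2])).continuousAt.continuousWithinAt
        · intro x hx
          rw [interior_Icc] at hx
          exact (hd x (by linarith [hx.1]) (by nlinarith [hx.2])).differentiableAt.differentiableWithinAt
        · intro x hx
          rw [interior_Icc] at hx
          obtain ⟨hx1, hx2⟩ := hx
          rw [(hd x (by linarith) (by nlinarith)).deriv]
          have hkey : ε * (1-ε) ≤ x * (1-x) := by nlinarith
          have : (x*(1-x))⁻¹ ≤ (ε*(1-ε))⁻¹ := by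
            exact inv_anti₀ he hkey
          have h1 : x - α ≤ 0 := by linarith
          have h2 : 0 ≤ (ε*(1-ε))⁻¹ - (x*(1-x))⁻¹ := by linarith
          exact mul_nonpos_of_nonpos_of_nonneg h1 h2
      exact hanti ⟨hβ1, hab⟩ ⟨hα1, le_refl _⟩ hab
  have hexp : ψ α = α * Real.log α + (1-α) * Real.log (1-α) := by
    simp [hψ]
  rw [hexp, hψ] at hψle
  simp only [] at hψle
  rw [div_eq_mul_inv]
  nlinarith [hψle]

lemma sum_prod_pi {N : ℕ} (g : Fin N → Bool → ℝ) :
    ∑ ξ : Fin N → Bool, ∏ i, g i (ξ i) = ∏ i, (g i true + g i false) := by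
  have h := (Finset.prod_univ_sum (fun _ : Fin N => (univ : Finset Bool)) (fun i x => g i x))
  rw [Fintype.piFinset_univ] at h
  rw [← h]
  congr 1
  funext i
  exact Fintype.sum_bool _

lemma sum_pi_mul {N : ℕ} (g : Fin N → Bool → ℝ) (hg : ∀ i, g i true + g i false = 1)
    (i₀ : Fin N) (r : Bool → ℝ) :
    ∑ ξ : Fin N → Bool, (∏ i, g i (ξ i)) * r (ξ i₀)
      = g i₀ true * r true + g i₀ false * r false := by
  have key : ∀ ξ : Fin N → Bool, (∏ i, g i (ξ i)) * r (ξ i₀)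
      = ∏ i, (g i (ξ i) * (if i = i₀ then r (ξ i) else 1)) := by
    intro ξ
    rw [Finset.prod_mul_distrib]
    congr 1
    rw [Finset.prod_ite_eq' univ i₀ (fun i => r (ξ i))]
    simp
  simp_rw [key]
  rw [sum_prod_pi (fun i x => g i x * (if i = i₀ then r x else 1))]
  rw [Finset.prod_eq_single i₀]
  · simp
  · intro b _ hb
    simp [hb, hg b]
  · simp

section split
variable {p : ℕ} {S : Type*} [Fintype S] [Nonempty S]

noncomputable def splitInv (m : Fin p) (x : S) (g : (j : {j : Fin p // j ≠ m}) → S) :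
    Fin p → S :=
  (Equiv.piSplitAt m (fun _ => S)).symm (x, g)

lemma splitInv_apply_self (m : Fin p) (x : S) (g) : splitInv m x g m = x := by
  simp [splitInv, Equiv.piSplitAt_symm_apply]

lemma splitInv_update (m : Fin p) (x x' : S) (g) :
    splitInv m x g = Function.update (splitInv m x' g) m x := by
  funext j
  rcases eq_or_ne j m with h | h
  · subst h; simp [splitInv, Equiv.piSplitAt_symm_apply]
  · simp [splitInv, Equiv.piSplitAt_symm_apply, h, Function.update_of_ne h]

lemma sum_split (m : Fin p) (H : (Fin p → S) → ℝ) :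
    ∑ a : Fin p → S, H a
      = ∑ g : (j : {j : Fin p // j ≠ m}) → S, ∑ x : S, H (splitInv m x g) := by
  rw [← Equiv.sum_comp (Equiv.piSplitAt m fun _ => S).symm H, Fintype.sum_prod_type,
    Finset.sum_comm]
  rfl

lemma peel_le (m : Fin p) (F G : (Fin p → S) → ℝ) (q0 : (Fin p → S) → S → ℝ) (C : ℝ)
    (hF : ∀ a x, F (Function.update a m x) = F a)
    (hFpos : ∀ a, 0 ≤ F a)
    (hq0 : ∀ a x, q0 (Function.update a m x) = q0 a)
    (hsum : ∀ a, ∑ x : S, q0 a x * G (Function.update a m x) ≤ C) :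
    (Fintype.card S : ℝ) * ∑ a : Fin p → S, F a * (q0 a (a m) * G a)
      ≤ C * ∑ a : Fin p → S, F a := by
  classical
  set c : S := Classical.arbitrary S with hcdef
  rw [sum_split m fun a => F a * (q0 a (a m) * G a), sum_split m F]
  have hinner : ∀ g, ∑ x : S, (fun a => F a * (q0 a (a m) * G a)) (splitInv m x g)
      ≤ F (splitInv m c g) * C := by
    intro g
    have hrw : ∀ x : S, (fun a => F a * (q0 a (a m) * G a)) (splitInv m x g)
        = F (splitInv m c g) * (q0 (splitInv m c g) x * G (Function.update (splitInv m c g) m x)) := by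
      intro x
      simp only []
      rw [splitInv_update m x c g, hF, hq0, Function.update_self]
    rw [Finset.sum_congr rfl fun x _ => hrw x, ← Finset.mul_sum]
    exact mul_le_mul_of_nonneg_left (hsum _) (hFpos _)
  have hFg : ∀ g, ∑ x : S, F (splitInv m x g) = (Fintype.card S : ℝ) * F (splitInv m c g) := by
    intro g
    rw [Finset.sum_congr rfl fun x _ => by rw [splitInv_update m x c g, hF]]
    simp [Finset.sum_const, nsmul_eq_mul, Finset.card_univ]
  calc (Fintype.card S : ℝ) * ∑ g : (j : {j : Fin p // j ≠ m}) → S,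
        ∑ x : S, (fun a => F a * (q0 a (a m) * G a)) (splitInv m x g)
      ≤ (Fintype.card S : ℝ) * ∑ g : (j : {j : Fin p // j ≠ m}) → S, F (splitInv m c g) * C := by
        exact mul_le_mul_of_nonneg_left (Finset.sum_le_sum fun g _ => hinner g) (by positivity)
    _ = C * ∑ g : (j : {j : Fin p // j ≠ m}) → S, ∑ x : S, F (splitInv m x g) := by
        rw [Finset.sum_congr rfl fun g _ => hFg g, Finset.mul_sum, Finset.mul_sum]
        exact Finset.sum_congr rfl fun g _ => by ring

lemma peel_eq (m : Fin p) (F : (Fin p → S) → ℝ) (q0 : (Fin p → S) → S → ℝ)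
    (hF : ∀ a x, F (Function.update a m x) = F a)
    (hq0 : ∀ a x, q0 (Function.update a m x) = q0 a)
    (hqsum : ∀ a, ∑ x : S, q0 a x = 1) :
    (Fintype.card S : ℝ) * ∑ a : Fin p → S, F a * q0 a (a m)
      = ∑ a : Fin p → S, F a := by
  classical
  set c : S := Classical.arbitrary S with hcdef
  rw [sum_split m fun a => F a * q0 a (a m), sum_split m F]
  have hinner : ∀ g, ∑ x : S, (fun a => F a * q0 a (a m)) (splitInv m x g)
      = F (splitInv m c g) := by
    intro g
    have hrw : ∀ x : S, (fun a => F a * q0 a (a m)) (splitInv m x g)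
        = F (splitInv m c g) * q0 (splitInv m c g) x := by
      intro x
      simp only []
      rw [splitInv_update m x c g, hF, hq0, Function.update_self]
    rw [Finset.sum_congr rfl fun x _ => hrw x, ← Finset.mul_sum, hqsum, mul_one]
  have hFg : ∀ g, ∑ x : S, F (splitInv m x g) = (Fintype.card S : ℝ) * F (splitInv m c g) := by
    intro g
    rw [Finset.sum_congr rfl fun x _ => by rw [splitInv_update m x c g, hF]]
    simp [Finset.sum_const, nsmul_eq_mul, Finset.card_univ]
  rw [Finset.sum_congr rfl fun g _ => hinner g, Finset.sum_congr rfl fun g _ => hFg g,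
    ← Finset.mul_sum]
end split
section mbp
variable {N p : ℕ} (Θ : Fin N → Fin N → Fin p → ℝ) (ε : ℝ) (f : ℝ → ℝ)

lemma mbpQ_pos (hε0 : 0 < ε) (hε1 : ε < 1/2) (hf : ∀ u, f u ∈ Set.Icc ε (1 - ε))
    (ξ : Fin N → Bool) (b : Fin p → (Fin N → Bool)) : 0 < mbpQ Θ f ξ b := by
  apply Finset.prod_pos
  intro i _
  rcases hf (mbpInner Θ i b) with ⟨h1, h2⟩
  split <;> linarith

lemma mbpQ_sum_one (hε0 : 0 < ε) (hε1 : ε < 1/2) (hf : ∀ u, f u ∈ Set.Icc ε (1 - ε))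
    (b : Fin p → (Fin N → Bool)) : ∑ ξ : Fin N → Bool, mbpQ Θ f ξ b = 1 := by
  unfold mbpQ
  rw [sum_prod_pi (fun i x => if x then f (mbpInner Θ i b) else 1 - f (mbpInner Θ i b))]
  apply Finset.prod_eq_one
  intro i _
  simp only [if_true, Bool.false_eq_true, if_false]
  ring

lemma histArg_update {p : ℕ} {S : Type*} [DecidableEq (Fin p)] (a w : Fin p → S)
    (m s : Fin p) (x : S) (hsm : (s:ℕ) ≤ (m:ℕ)) :
    histArg (Function.update a m x) w s = histArg a w s := by
  funext j
  unfold histArg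
  by_cases h : (j:ℕ) < (s:ℕ)
  · simp only [if_pos h]
    apply Function.update_of_ne
    apply Fin.ne_of_val_ne
    simp only []
    omega
  · simp only [if_neg h]

lemma inner_diff {N p : ℕ} (Θ : Fin N → Fin N → Fin p → ℝ)
    (a z y : Fin p → (Fin N → Bool)) (t : Fin p) (i : Fin N) :
    |mbpInner Θ i (histArg a z t) - mbpInner Θ i (histArg a y t)|
      ≤ ∑ ℓ ∈ Finset.univ.filter (fun ℓ : Fin p => t ≤ ℓ), ∑ j : Fin N, |Θ i j ℓ| := by
  classical
  have h1 : mbpInner Θ i (histArg a z t) - mbpInner Θ i (histArg a y t)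
      = ∑ ℓ : Fin p, ∑ j : Fin N, Θ i j ℓ *
          ((if histArg a z t ℓ j then (1:ℝ) else 0) - (if histArg a y t ℓ j then 1 else 0)) := by
    unfold mbpInner
    rw [Finset.sum_comm (s := (univ : Finset (Fin N))) (t := (univ : Finset (Fin p)))
        (f := fun j ℓ => Θ i j ℓ * (if histArg a z t ℓ j then (1:ℝ) else 0)),
      Finset.sum_comm (s := (univ : Finset (Fin N))) (t := (univ : Finset (Fin p)))
        (f := fun j ℓ => Θ i j ℓ * (if histArg a y t ℓ j then (1:ℝ) else 0)),
      ← Finset.sum_sub_distrib]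
    apply Finset.sum_congr rfl; intro ℓ _
    rw [← Finset.sum_sub_distrib]
    apply Finset.sum_congr rfl; intro j _
    ring
  rw [h1, ← Finset.sum_filter_of_ne (p := fun ℓ : Fin p => t ≤ ℓ) ?_]
  · refine le_trans (Finset.abs_sum_le_sum_abs _ _) ?_
    apply Finset.sum_le_sum
    intro ℓ _
    refine le_trans (Finset.abs_sum_le_sum_abs _ _) ?_
    apply Finset.sum_le_sum
    intro j _
    rw [abs_mul]
    have hd : |(if histArg a z t ℓ j then (1:ℝ) else 0) - (if histArg a y t ℓ j then 1 else 0)| ≤ 1 := by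
      split <;> split <;> norm_num
    calc |Θ i j ℓ| * |(if histArg a z t ℓ j then (1:ℝ) else 0) - (if histArg a y t ℓ j then 1 else 0)|
        ≤ |Θ i j ℓ| * 1 := mul_le_mul_of_nonneg_left hd (abs_nonneg _)
      _ = |Θ i j ℓ| := mul_one _
  · intro ℓ _ hne
    by_contra hle
    apply hne
    have hlt : (ℓ:ℕ) < (t:ℕ) := by
      rcases Fin.lt_or_le ℓ t with h | h
      · exact h
      · exact absurd h hle
    have heq : histArg a z t ℓ = histArg a y t ℓ := by
      unfold histArg
      simp [hlt]
    rw [heq]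
    apply Finset.sum_eq_zero
    intro j _
    ring
end mbp
lemma condKL_le {N p : ℕ} (Θ : Fin N → Fin N → Fin p → ℝ) (ε : ℝ) (f : ℝ → ℝ)
    (hε0 : 0 < ε) (hε1 : ε < 1/2) (hf : ∀ u, f u ∈ Set.Icc ε (1 - ε))
    (b b' : Fin p → (Fin N → Bool)) :
    ∑ ξ : Fin N → Bool, mbpQ Θ f ξ b
        * (Real.log (mbpQ Θ f ξ b) - Real.log (mbpQ Θ f ξ b'))
      ≤ ∑ i : Fin N, (f (mbpInner Θ i b) - f (mbpInner Θ i b'))^2 / (2*ε*(1-ε)) := by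
  classical
  set g : Fin N → Bool → ℝ :=
    fun i x => if x then f (mbpInner Θ i b) else 1 - f (mbpInner Θ i b) with hgdef
  set g' : Fin N → Bool → ℝ :=
    fun i x => if x then f (mbpInner Θ i b') else 1 - f (mbpInner Θ i b') with hg'def
  have hbd : ∀ u, ε ≤ f u ∧ f u ≤ 1 - ε := fun u => ⟨(hf u).1, (hf u).2⟩
  have hgpos : ∀ i x, 0 < g i x := by
    intro i x
    rcases hbd (mbpInner Θ i b) with ⟨h1, h2⟩
    simp only [hgdef]
    split <;> linarith
  have hg'pos : ∀ i x, 0 < g' i x := by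
    intro i x
    rcases hbd (mbpInner Θ i b') with ⟨h1, h2⟩
    simp only [hg'def]
    split <;> linarith
  have hQ : ∀ ξ, mbpQ Θ f ξ b = ∏ i, g i (ξ i) := fun ξ => rfl
  have hQ' : ∀ ξ, mbpQ Θ f ξ b' = ∏ i, g' i (ξ i) := fun ξ => rfl
  have hlog : ∀ ξ : Fin N → Bool, Real.log (mbpQ Θ f ξ b) - Real.log (mbpQ Θ f ξ b')
      = ∑ i, (Real.log (g i (ξ i)) - Real.log (g' i (ξ i))) := by
    intro ξ
    rw [hQ, hQ', Real.log_prod (fun i _ => (hgpos i _).ne'),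
      Real.log_prod (fun i _ => (hg'pos i _).ne'), ← Finset.sum_sub_distrib]
  calc ∑ ξ : Fin N → Bool, mbpQ Θ f ξ b
        * (Real.log (mbpQ Θ f ξ b) - Real.log (mbpQ Θ f ξ b'))
      = ∑ i, ∑ ξ : Fin N → Bool,
          (∏ k, g k (ξ k)) * (Real.log (g i (ξ i)) - Real.log (g' i (ξ i))) := by
        rw [Finset.sum_congr rfl fun ξ _ => by rw [hlog, hQ, Finset.mul_sum]]
        exact Finset.sum_comm
    _ = ∑ i, (g i true * (Real.log (g i true) - Real.log (g' i true))
          + g i false * (Real.log (g i false) - Real.log (g' i false))) := by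
        refine Finset.sum_congr rfl fun i _ => ?_
        have hgone : ∀ k, g k true + g k false = 1 := by
          intro k
          simp only [hgdef, if_true, Bool.false_eq_true, if_false]
          ring
        exact sum_pi_mul g hgone i (fun x => Real.log (g i x) - Real.log (g' i x))
    _ ≤ _ := by
        apply Finset.sum_le_sum
        intro i _
        have h1 := klBern ε hε0 hε1 (f (mbpInner Θ i b)) (f (mbpInner Θ i b'))
          (hf _) (hf _)
        simp only [hgdef, hg'def, if_true, Bool.false_eq_true, if_false]
        linarith

def Pm {p : ℕ} {S : Type*} (q : S → (Fin p → S) → ℝ) (w : Fin p → S) (m : ℕ)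
    (a : Fin p → S) : ℝ :=
  ∏ s ∈ Finset.univ.filter (fun s : Fin p => (s:ℕ) < m), q (a s) (histArg a w s)

section pm
variable {p : ℕ} {S : Type*} (q : S → (Fin p → S) → ℝ) (w : Fin p → S)

lemma Pm_zero (a : Fin p → S) : Pm q w 0 a = 1 := by
  unfold Pm
  rw [Finset.filter_false_of_mem (fun s _ => by omega)]
  simp

lemma Pm_top (a : Fin p → S) : Pm q w p a = blockPmf q w a := by
  unfold Pm blockPmf
  rw [Finset.filter_true_of_mem (fun s _ => s.isLt)]

lemma Pm_succ (m : ℕ) (hm : m < p) (a : Fin p → S) :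
    Pm q w (m+1) a = Pm q w m a * q (a ⟨m, hm⟩) (histArg a w ⟨m, hm⟩) := by
  classical
  unfold Pm
  have hset : Finset.univ.filter (fun s : Fin p => (s:ℕ) < m+1)
      = insert ⟨m, hm⟩ (Finset.univ.filter (fun s : Fin p => (s:ℕ) < m)) := by
    ext s
    simp only [Finset.mem_filter, Finset.mem_insert, Finset.mem_univ, true_and, Fin.ext_iff]
    omega
  rw [hset, Finset.prod_insert (by simp)]
  ring

lemma Pm_update [DecidableEq (Fin p)] (m : ℕ) (k : Fin p) (hmk : m ≤ (k:ℕ))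
    (a : Fin p → S) (x : S) :
    Pm q w m (Function.update a k x) = Pm q w m a := by
  apply Finset.prod_congr rfl
  intro s hs
  rw [Finset.mem_filter] at hs
  have hsk : s ≠ k := by
    apply Fin.ne_of_val_ne
    omega
  rw [Function.update_of_ne hsk, histArg_update a w k s x (by omega)]

lemma Pm_nonneg (hq : ∀ x b, 0 ≤ q x b) (m : ℕ) (a : Fin p → S) : 0 ≤ Pm q w m a :=
  Finset.prod_nonneg fun s _ => hq _ _
end pm

set_option linter.unusedSectionVars false
set_option linter.unusedVariables false
set_option maxHeartbeats 1000000

/-- Auxiliary: per-step `Dt`. -/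
noncomputable def Dt {N p : ℕ} (Θ : Fin N → Fin N → Fin p → ℝ) (f : ℝ → ℝ)
    (z y : Fin p → (Fin N → Bool)) (t : Fin p) (a : Fin p → (Fin N → Bool)) : ℝ :=
  Real.log (mbpQ Θ f (a t) (histArg a z t)) - Real.log (mbpQ Θ f (a t) (histArg a y t))

lemma Dt_update {N p : ℕ} (Θ : Fin N → Fin N → Fin p → ℝ) (f : ℝ → ℝ)
    (z y : Fin p → (Fin N → Bool)) (t : Fin p) (m : Fin p) (htm : (t:ℕ) < (m:ℕ))
    (a : Fin p → (Fin N → Bool)) (x : Fin N → Bool) :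
    Dt Θ f z y t (Function.update a m x) = Dt Θ f z y t a := by
  unfold Dt
  rw [Function.update_of_ne (Fin.ne_of_val_ne (by omega)),
    histArg_update a z m t x (le_of_lt htm), histArg_update a y m t x (le_of_lt htm)]
/-- KL divergence between block distributions of the multivariate
Bernoulli process is bounded by
`(3L_f²/(4ε(1−ε))) Σ_t Σ_i (Σ_{ℓ=t}^p Σ_j |Θ_{ijℓ}|)²`. -/
theorem stmt7 {N p : ℕ} (hN : 1 ≤ N) (hp : 1 ≤ p)
    (Θ : Fin N → Fin N → Fin p → ℝ) (ε Lf : ℝ)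
    (hε0 : 0 < ε) (hε1 : ε < 1 / 2) (hLf : 0 < Lf)
    (f : ℝ → ℝ) (hf : ∀ u, f u ∈ Set.Icc ε (1 - ε))
    (hLip : ∀ u v, |f u - f v| ≤ Lf * |u - v|)
    (z y : Fin p → (Fin N → Bool)) :
    (∑ a : Fin p → (Fin N → Bool),
        blockPmf (mbpQ Θ f) z a *
          Real.log (blockPmf (mbpQ Θ f) z a / blockPmf (mbpQ Θ f) y a)) ≤
      (3 * Lf ^ 2 / (4 * ε * (1 - ε))) *
        ∑ t : Fin p, ∑ i : Fin N,
          (∑ ℓ ∈ Finset.univ.filter (fun ℓ : Fin p => t ≤ ℓ),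
            ∑ j : Fin N, |Θ i j ℓ|) ^ 2 := by

  classical
  have hε1' : ε < 1 - ε := by linarith
  have hQpos : ∀ (ξ : Fin N → Bool) (b : Fin p → (Fin N → Bool)), 0 < mbpQ Θ f ξ b :=
    mbpQ_pos Θ ε f hε0 hε1 hf
  have hQsum : ∀ b : Fin p → (Fin N → Bool), ∑ ξ : Fin N → Bool, mbpQ Θ f ξ b = 1 :=
    mbpQ_sum_one Θ ε f hε0 hε1 hf
  have hbp : ∀ (w a : Fin p → (Fin N → Bool)), 0 < blockPmf (mbpQ Θ f) w a :=
    fun w a => Finset.prod_pos fun s _ => hQpos _ _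
  have hBpos : (0:ℝ) < (Fintype.card (Fin N → Bool) : ℝ) := by
    exact_mod_cast Fintype.card_pos
  set B : ℝ := (Fintype.card (Fin N → Bool) : ℝ) with hBdef
  -- the per-step constant
  set Ct : Fin p → ℝ := fun t => ∑ i : Fin N,
      (Lf * ∑ ℓ ∈ Finset.univ.filter (fun ℓ : Fin p => t ≤ ℓ), ∑ j : Fin N, |Θ i j ℓ|)^2
        / (2*ε*(1-ε)) with hCtdef
  -- normalization sums
  have hc3 : ∀ m : ℕ, m ≤ p →
      B^m * ∑ a : Fin p → (Fin N → Bool), Pm (mbpQ Θ f) z m a = B^p := by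
    intro m
    induction m with
    | zero =>
      intro _
      rw [Finset.sum_congr rfl fun a _ => Pm_zero (mbpQ Θ f) z a]
      rw [Finset.sum_const, Finset.card_univ, Fintype.card_fun, Fintype.card_fin]
      simp only [pow_zero, one_mul, nsmul_eq_mul, mul_one, hBdef]
      push_cast
      ring
    | succ n ih =>
      intro h
      have hn : n < p := h
      have hpe' : B * ∑ a : Fin p → (Fin N → Bool),
          Pm (mbpQ Θ f) z n a * mbpQ Θ f (a ⟨n, hn⟩) (histArg a z ⟨n, hn⟩)
          = ∑ a : Fin p → (Fin N → Bool), Pm (mbpQ Θ f) z n a :=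
        peel_eq (⟨n, hn⟩ : Fin p) (Pm (mbpQ Θ f) z n)
          (fun a x => mbpQ Θ f x (histArg a z ⟨n, hn⟩))
          (fun a x => Pm_update (mbpQ Θ f) z n ⟨n, hn⟩ (le_refl n) a x)
          (fun a x => by
            funext x'
            show mbpQ Θ f x' (histArg (Function.update a ⟨n,hn⟩ x) z ⟨n,hn⟩)
              = mbpQ Θ f x' (histArg a z ⟨n,hn⟩)
            rw [histArg_update a z ⟨n,hn⟩ ⟨n,hn⟩ x (le_refl _)])
          (fun a => hQsum _)
      calc B^(n+1) * ∑ a : Fin p → (Fin N → Bool), Pm (mbpQ Θ f) z (n+1) a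
          = B^n * (B * ∑ a : Fin p → (Fin N → Bool),
              Pm (mbpQ Θ f) z n a * mbpQ Θ f (a ⟨n, hn⟩) (histArg a z ⟨n, hn⟩)) := by
            rw [Finset.sum_congr rfl fun a _ => Pm_succ (mbpQ Θ f) z n hn a]
            ring
        _ = B^n * ∑ a : Fin p → (Fin N → Bool), Pm (mbpQ Θ f) z n a := by rw [hpe']
        _ = B^p := ih (le_of_lt hn)
  -- main per-step bound
  have key : ∀ t : Fin p,
      ∑ a : Fin p → (Fin N → Bool), Pm (mbpQ Θ f) z p a * Dt Θ f z y t a ≤ Ct t := by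
    intro t
    -- conditional-KL bound uniform in the history
    have hcond : ∀ a : Fin p → (Fin N → Bool),
        ∑ x : Fin N → Bool, mbpQ Θ f x (histArg a z t) * Dt Θ f z y t (Function.update a t x)
          ≤ Ct t := by
      intro a
      have harg : ∀ x : Fin N → Bool, Dt Θ f z y t (Function.update a t x)
          = Real.log (mbpQ Θ f x (histArg a z t))
            - Real.log (mbpQ Θ f x (histArg a y t)) := by
        intro x
        unfold Dt
        rw [Function.update_self, histArg_update a z t t x (le_refl _),
          histArg_update a y t t x (le_refl _)]
      rw [Finset.sum_congr rfl fun x _ => by rw [harg]]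
      refine le_trans (condKL_le Θ ε f hε0 hε1 hf (histArg a z t) (histArg a y t)) ?_
      rw [hCtdef]
      apply Finset.sum_le_sum
      intro i _
      have hc2' : (0:ℝ) < 2*ε*(1-ε) := by nlinarith
      rw [div_le_div_iff_of_pos_right hc2']
      have h1 : |f (mbpInner Θ i (histArg a z t)) - f (mbpInner Θ i (histArg a y t))|
          ≤ Lf * ∑ ℓ ∈ Finset.univ.filter (fun ℓ : Fin p => t ≤ ℓ), ∑ j : Fin N, |Θ i j ℓ| :=
        le_trans (hLip _ _)
          (mul_le_mul_of_nonneg_left (inner_diff Θ a z y t i) hLf.le)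
      calc (f (mbpInner Θ i (histArg a z t)) - f (mbpInner Θ i (histArg a y t)))^2
          = |f (mbpInner Θ i (histArg a z t)) - f (mbpInner Θ i (histArg a y t))|^2 :=
            (sq_abs _).symm
        _ ≤ (Lf * ∑ ℓ ∈ Finset.univ.filter (fun ℓ : Fin p => t ≤ ℓ),
              ∑ j : Fin N, |Θ i j ℓ|)^2 := pow_le_pow_left₀ (abs_nonneg _) h1 2
    -- step bound at time t
    have hc2 : B * ∑ a : Fin p → (Fin N → Bool), Pm (mbpQ Θ f) z ((t:ℕ)+1) a * Dt Θ f z y t a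
        ≤ Ct t * ∑ a : Fin p → (Fin N → Bool), Pm (mbpQ Θ f) z (t:ℕ) a := by
      have hpl : B * ∑ a : Fin p → (Fin N → Bool),
          Pm (mbpQ Θ f) z (t:ℕ) a * (mbpQ Θ f (a t) (histArg a z t) * Dt Θ f z y t a)
          ≤ Ct t * ∑ a : Fin p → (Fin N → Bool), Pm (mbpQ Θ f) z (t:ℕ) a :=
        peel_le t (Pm (mbpQ Θ f) z (t:ℕ)) (Dt Θ f z y t)
          (fun a x => mbpQ Θ f x (histArg a z t)) (Ct t)
          (fun a x => Pm_update (mbpQ Θ f) z (t:ℕ) t (le_refl _) a x)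
          (fun a => Pm_nonneg (mbpQ Θ f) z (fun x b => (hQpos x b).le) (t:ℕ) a)
          (fun a x => by
            funext x'
            show mbpQ Θ f x' (histArg (Function.update a t x) z t)
              = mbpQ Θ f x' (histArg a z t)
            rw [histArg_update a z t t x (le_refl _)])
          hcond
      refine le_trans (le_of_eq ?_) hpl
      congr 1
      apply Finset.sum_congr rfl
      intro a _
      have := Pm_succ (mbpQ Θ f) z (t:ℕ) t.isLt a
      rw [Fin.eta] at this
      rw [this]
      ring
    -- propagate the identity down to m = p
    have hc1 : ∀ k : ℕ, (t:ℕ)+1+k ≤ p →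
        B^k * ∑ a : Fin p → (Fin N → Bool), Pm (mbpQ Θ f) z ((t:ℕ)+1+k) a * Dt Θ f z y t a
          = ∑ a : Fin p → (Fin N → Bool), Pm (mbpQ Θ f) z ((t:ℕ)+1) a * Dt Θ f z y t a := by
      intro k
      induction k with
      | zero => intro _; simp
      | succ n ih =>
        intro h
        have hm : (t:ℕ)+1+n < p := by omega
        have hpe' : B * ∑ a : Fin p → (Fin N → Bool),
            (Pm (mbpQ Θ f) z ((t:ℕ)+1+n) a * Dt Θ f z y t a)
              * mbpQ Θ f (a ⟨(t:ℕ)+1+n, hm⟩) (histArg a z ⟨(t:ℕ)+1+n, hm⟩)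
            = ∑ a : Fin p → (Fin N → Bool), Pm (mbpQ Θ f) z ((t:ℕ)+1+n) a * Dt Θ f z y t a :=
          peel_eq (⟨(t:ℕ)+1+n, hm⟩ : Fin p)
            (fun a => Pm (mbpQ Θ f) z ((t:ℕ)+1+n) a * Dt Θ f z y t a)
            (fun a x => mbpQ Θ f x (histArg a z ⟨(t:ℕ)+1+n, hm⟩))
            (fun a x => by
              show Pm (mbpQ Θ f) z ((t:ℕ)+1+n) (Function.update a ⟨(t:ℕ)+1+n, hm⟩ x)
                    * Dt Θ f z y t (Function.update a ⟨(t:ℕ)+1+n, hm⟩ x)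
                  = Pm (mbpQ Θ f) z ((t:ℕ)+1+n) a * Dt Θ f z y t a
              rw [Pm_update (mbpQ Θ f) z ((t:ℕ)+1+n) ⟨(t:ℕ)+1+n, hm⟩ (le_refl _) a x,
                Dt_update Θ f z y t ⟨(t:ℕ)+1+n, hm⟩ (show (t:ℕ) < (t:ℕ)+1+n by omega) a x])
            (fun a x => by
              funext x'
              show mbpQ Θ f x' (histArg (Function.update a ⟨(t:ℕ)+1+n, hm⟩ x) z ⟨(t:ℕ)+1+n, hm⟩)
                = mbpQ Θ f x' (histArg a z ⟨(t:ℕ)+1+n, hm⟩)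
              rw [histArg_update a z ⟨(t:ℕ)+1+n, hm⟩ ⟨(t:ℕ)+1+n, hm⟩ x (le_refl _)])
            (fun a => hQsum _)
        calc B^(n+1) * ∑ a : Fin p → (Fin N → Bool),
              Pm (mbpQ Θ f) z ((t:ℕ)+1+(n+1)) a * Dt Θ f z y t a
            = B^n * (B * ∑ a : Fin p → (Fin N → Bool),
                (Pm (mbpQ Θ f) z ((t:ℕ)+1+n) a * Dt Θ f z y t a)
                  * mbpQ Θ f (a ⟨(t:ℕ)+1+n, hm⟩) (histArg a z ⟨(t:ℕ)+1+n, hm⟩)) := by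
              have hs : ∀ a : Fin p → (Fin N → Bool),
                  Pm (mbpQ Θ f) z ((t:ℕ)+1+(n+1)) a
                    = Pm (mbpQ Θ f) z ((t:ℕ)+1+n) a
                      * mbpQ Θ f (a ⟨(t:ℕ)+1+n, hm⟩) (histArg a z ⟨(t:ℕ)+1+n, hm⟩) :=
                fun a => Pm_succ (mbpQ Θ f) z ((t:ℕ)+1+n) hm a
              have hs2 : ∑ a : Fin p → (Fin N → Bool),
                    Pm (mbpQ Θ f) z ((t:ℕ)+1+(n+1)) a * Dt Θ f z y t a
                  = ∑ a : Fin p → (Fin N → Bool),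
                      (Pm (mbpQ Θ f) z ((t:ℕ)+1+n) a * Dt Θ f z y t a)
                        * mbpQ Θ f (a ⟨(t:ℕ)+1+n, hm⟩) (histArg a z ⟨(t:ℕ)+1+n, hm⟩) := by
                apply Finset.sum_congr rfl
                intro a _
                rw [hs a]
                ring
              rw [hs2, pow_succ]
              ring
          _ = B^n * ∑ a : Fin p → (Fin N → Bool),
                Pm (mbpQ Θ f) z ((t:ℕ)+1+n) a * Dt Θ f z y t a := by rw [hpe']
          _ = _ := ih (by omega)
    obtain ⟨k, hk⟩ : ∃ k, (t:ℕ)+1+k = p := ⟨p - ((t:ℕ)+1), by omega⟩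
    have hc1' := hc1 k (by omega)
    rw [hk] at hc1'
    have hBp : (0:ℝ) < B^p := pow_pos hBpos p
    have hchain : B^p * ∑ a : Fin p → (Fin N → Bool), Pm (mbpQ Θ f) z p a * Dt Θ f z y t a
        ≤ B^p * Ct t := by
      have epow : B^p = B^(t:ℕ) * B * B^k := by
        have e2 : B^((t:ℕ)+1+k) = B^(t:ℕ) * B * B^k := by
          rw [pow_add, pow_add, pow_one]
        rw [← e2, hk]
      calc B^p * ∑ a : Fin p → (Fin N → Bool), Pm (mbpQ Θ f) z p a * Dt Θ f z y t a
          = B^(t:ℕ) * (B * (B^k * ∑ a : Fin p → (Fin N → Bool),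
              Pm (mbpQ Θ f) z p a * Dt Θ f z y t a)) := by
            rw [epow]
            ring
        _ = B^(t:ℕ) * (B * ∑ a : Fin p → (Fin N → Bool),
              Pm (mbpQ Θ f) z ((t:ℕ)+1) a * Dt Θ f z y t a) :=
            congrArg (fun X => B^(t:ℕ) * (B * X)) hc1'
        _ ≤ B^(t:ℕ) * (Ct t * ∑ a : Fin p → (Fin N → Bool), Pm (mbpQ Θ f) z (t:ℕ) a) :=
            mul_le_mul_of_nonneg_left hc2 (pow_nonneg hBpos.le _)
        _ = Ct t * (B^(t:ℕ) * ∑ a : Fin p → (Fin N → Bool), Pm (mbpQ Θ f) z (t:ℕ) a) := by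
            ring
        _ = Ct t * B^p := by rw [hc3 (t:ℕ) (le_of_lt t.isLt)]
        _ = B^p * Ct t := by ring
    exact le_of_mul_le_mul_left hchain hBp
  -- assemble
  have hsplit : ∀ a : Fin p → (Fin N → Bool),
      blockPmf (mbpQ Θ f) z a
          * Real.log (blockPmf (mbpQ Θ f) z a / blockPmf (mbpQ Θ f) y a)
        = ∑ t : Fin p, Pm (mbpQ Θ f) z p a * Dt Θ f z y t a := by
    intro a
    rw [Real.log_div (hbp z a).ne' (hbp y a).ne']
    have hlz : Real.log (blockPmf (mbpQ Θ f) z a)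
        = ∑ t : Fin p, Real.log (mbpQ Θ f (a t) (histArg a z t)) := by
      unfold blockPmf
      exact Real.log_prod (fun s _ => (hQpos _ _).ne')
    have hly : Real.log (blockPmf (mbpQ Θ f) y a)
        = ∑ t : Fin p, Real.log (mbpQ Θ f (a t) (histArg a y t)) := by
      unfold blockPmf
      exact Real.log_prod (fun s _ => (hQpos _ _).ne')
    rw [hlz, hly, ← Finset.sum_sub_distrib, Finset.mul_sum]
    refine Finset.sum_congr rfl fun t _ => ?_
    rw [← Pm_top (mbpQ Θ f) z a]
    rfl
  calc (∑ a : Fin p → (Fin N → Bool),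
        blockPmf (mbpQ Θ f) z a *
          Real.log (blockPmf (mbpQ Θ f) z a / blockPmf (mbpQ Θ f) y a))
      = ∑ t : Fin p, ∑ a : Fin p → (Fin N → Bool),
          Pm (mbpQ Θ f) z p a * Dt Θ f z y t a := by
        rw [Finset.sum_congr rfl fun a _ => hsplit a]
        exact Finset.sum_comm
    _ ≤ ∑ t : Fin p, Ct t := Finset.sum_le_sum fun t _ => key t
    _ ≤ (3 * Lf ^ 2 / (4 * ε * (1 - ε))) *
        ∑ t : Fin p, ∑ i : Fin N,
          (∑ ℓ ∈ Finset.univ.filter (fun ℓ : Fin p => t ≤ ℓ),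
            ∑ j : Fin N, |Θ i j ℓ|) ^ 2 := by
        rw [Finset.mul_sum]
        apply Finset.sum_le_sum
        intro t _
        rw [hCtdef, Finset.mul_sum]
        apply Finset.sum_le_sum
        intro i _
        have hd0 : (0:ℝ) ≤ ∑ ℓ ∈ Finset.univ.filter (fun ℓ : Fin p => t ≤ ℓ),
            ∑ j : Fin N, |Θ i j ℓ| :=
          Finset.sum_nonneg fun ℓ _ => Finset.sum_nonneg fun j _ => abs_nonneg _
        have h2 : (0:ℝ) < 2*ε*(1-ε) := by nlinarith
        have h4 : (0:ℝ) < 4*ε*(1-ε) := by nlinarith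
        set d : ℝ := ∑ ℓ ∈ Finset.univ.filter (fun ℓ : Fin p => t ≤ ℓ),
            ∑ j : Fin N, |Θ i j ℓ| with hddef
        have heq : 3*Lf^2/(4*ε*(1-ε)) * d^2 - (Lf*d)^2/(2*ε*(1-ε))
            = (Lf^2*d^2)/(4*ε*(1-ε)) := by
          field_simp
          ring
        have hge : (0:ℝ) ≤ (Lf^2*d^2)/(4*ε*(1-ε)) :=
          div_nonneg (by positivity) h4.le
        linarith
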